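/- First Borel–Cantelli-type convergence: If g decreases monotonically to zero and ∫_0^∞ u^{d−1} P[w ≤ g(u)]^m du < ∞, where 𝔄 ⊆ 𝔈(B_b) has |𝔄| = m, then almost surely for all sufficiently large n, every z ∈ B_{n+b} has at least one edge e ∈ 𝔄 + z with w_e > g(n). -/

import Mathlib

open MeasureTheory ProbabilityTheory Filter
open scoped ENNReal

lemma stmt13_pow_aux (c : ℕ) : ∀ d : ℕ, (c+2)^d ≤ c^d + 2*d*(c+2)^(d-1)
  | 0 => by simp
  | 1 => by simp
  | (d+2) => by
    have ih := stmt13_pow_aux c (d+1)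
    have hc : (c+2)^d * c ≤ (c+2)^(d+1) := by
      have : (c+2)^d * c ≤ (c+2)^d * (c+2) := by gcongr; omega
      simpa [pow_succ] using this
    calc (c+2)^(d+2) = (c+2)^(d+1) * c + 2*(c+2)^(d+1) := by ring
    _ ≤ (c^(d+1) + 2*(d+1)*(c+2)^d) * c + 2*(c+2)^(d+1) := by
        have h := Nat.mul_le_mul_right c (by simpa using ih)
        omega
    _ = c^(d+2) + 2*(d+1)*((c+2)^d * c) + 2*(c+2)^(d+1) := by ring
    _ ≤ c^(d+2) + 2*(d+1)*(c+2)^(d+1) + 2*(c+2)^(d+1) := by gcongr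
    _ = c^(d+2) + 2*(d+2)*(c+2)^(d+1) := by ring
    _ = c^(d+2) + 2*(d+2)*(c+2)^((d+2)-1) := by norm_num

/-- First Borel–Cantelli-type convergence (Lemma 2.1, convergent case).  Conductances
`(w_e)` are i.i.d., indexed by the edges `(x, i)` of `ℤ^d` (site plus positive axis
direction), `d ≥ 2`.  If `g : (0,∞) → (0,∞)` decreases monotonically to zero and
`∫_0^∞ u^{d−1} P[w ≤ g(u)]^m du < ∞` with `m = |𝔄|` for an edge set `𝔄 ⊆ 𝔈(B_b)`,
then almost surely, for all sufficiently large `n`, every `z ∈ B_{n+b}` has at least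
one edge `e ∈ 𝔄 + z` with `w_e > g(n)`. -/
theorem stmt13 {Ω : Type*} [MeasurableSpace Ω] (μ : Measure Ω) [IsProbabilityMeasure μ]
    (d b : ℕ) (hd : 2 ≤ d)
    (w : ((Fin d → ℤ) × Fin d) → Ω → ℝ)
    (hmeas : ∀ e, Measurable (w e))
    (hpos : ∀ e ω, 0 < w e ω)
    (hindep : iIndepFun w μ)
    (hident : ∀ e e', IdentDistrib (w e) (w e') μ μ)
    (g : ℝ → ℝ) (hganti : Antitone g) (hgpos : ∀ u, 0 < u → 0 < g u)
    (hg0 : Tendsto g atTop (nhds 0))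
    (𝔄 : Finset ((Fin d → ℤ) × Fin d))
    (h𝔄 : ∀ e ∈ 𝔄, ∀ i, |e.1 i| ≤ (b : ℤ))
    (F : ℝ → ℝ)
    (hF : ∀ u, F u = (μ {ω | w ((fun _ => 0), ⟨0, by omega⟩) ω ≤ u}).toReal)
    (hconv : ∫⁻ u in Set.Ioi (0 : ℝ),
        ENNReal.ofReal (u ^ (d - 1) * F (g u) ^ 𝔄.card) < ⊤) :
    μ {ω | ∀ᶠ n : ℕ in atTop, ∀ z : Fin d → ℤ, (∀ i, |z i| ≤ (n : ℤ) + b) →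
        ∃ e ∈ 𝔄, g n < w (e.1 + z, e.2) ω} = 1 := by
  classical
  set m := 𝔄.card with hm
  set f : ℝ → ℝ≥0∞ := fun u => ENNReal.ofReal (u ^ (d - 1) * F (g u) ^ m) with hf
  set p : ℝ → ℝ≥0∞ := fun c => μ {ω | w ((fun _ => 0), ⟨0, by omega⟩) ω ≤ c} with hp
  -- basic facts about p and F
  have hpfin : ∀ c, p c ≠ ⊤ := fun c => measure_ne_top μ _
  have hFp : ∀ c, ENNReal.ofReal (F c) = p c := by
    intro c; rw [hF]; exact ENNReal.ofReal_toReal (hpfin c)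
  have hFnn : ∀ c, 0 ≤ F c := by intro c; rw [hF]; exact ENNReal.toReal_nonneg
  have hFmono : Monotone F := by
    intro c c' hcc'
    rw [hF, hF]
    refine ENNReal.toReal_mono (hpfin c') (measure_mono ?_)
    intro ω hω; exact le_trans hω hcc'
  -- identical one-edge probabilities
  have hp_eq : ∀ (e : (Fin d → ℤ) × Fin d) (c : ℝ), μ {ω | w e ω ≤ c} = p c := by
    intro e c
    have h := (hident e ((fun _ => 0), ⟨0, by omega⟩)).measure_mem_eq
      (measurableSet_Iic (a := c))
    exact h
  -- the product formula by independence
  have hprod : ∀ (z : Fin d → ℤ) (c : ℝ),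
      μ {ω | ∀ e ∈ 𝔄, w (e.1 + z, e.2) ω ≤ c} = p c ^ m := by
    intro z c
    have hinj : Function.Injective
        (fun e : (Fin d → ℤ) × Fin d => (e.1 + z, e.2)) := by
      intro e e' h
      simp only [Prod.mk.injEq] at h
      exact Prod.ext (by have := h.1; exact add_right_cancel this) h.2
    have hset : {ω | ∀ e ∈ 𝔄, w (e.1 + z, e.2) ω ≤ c}
        = ⋂ e ∈ 𝔄.image (fun e => (e.1 + z, e.2)), w e ⁻¹' Set.Iic c := by
      ext ω
      simp only [Set.mem_setOf_eq, Set.mem_iInter, Finset.mem_image, Set.mem_preimage,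
        Set.mem_Iic, forall_exists_index, and_imp]
      constructor
      · rintro h e' e he rfl; exact h e he
      · intro h e he; exact h _ e he rfl
    rw [hset, hindep.meas_biInter
      (fun i _ => ⟨Set.Iic c, measurableSet_Iic, rfl⟩)]
    have hpr : ∀ e ∈ 𝔄.image (fun e => (e.1 + z, e.2)),
        μ (w e ⁻¹' Set.Iic c) = p c := fun e _ => hp_eq e c
    rw [Finset.prod_congr rfl hpr, Finset.prod_const,
      Finset.card_image_of_injective _ hinj]
  -- boxes and shells
  set Box : ℕ → Finset (Fin d → ℤ) :=
    fun R => Fintype.piFinset fun _ => Finset.Icc (-(R:ℤ)) R with hBox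
  have hBoxMem : ∀ R (z : Fin d → ℤ), z ∈ Box R ↔ ∀ i, |z i| ≤ (R:ℤ) := by
    intro R z
    simp [hBox, Fintype.mem_piFinset, abs_le]
  have hBoxCard : ∀ R, (Box R).card = (2*R+1)^d := by
    intro R
    have h1 : (Box R).card = ∏ _i : Fin d, (Finset.Icc (-(R:ℤ)) R).card :=
      Fintype.card_piFinset _
    rw [h1, Finset.prod_const, Int.card_Icc, Finset.card_univ, Fintype.card_fin]
    congr 1
    omega
  set shell : ℕ → Finset (Fin d → ℤ) := fun R => Box R \ Box (R-1) with hshell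
  -- the bad events
  set C : (Fin d → ℤ) → ℝ → Set Ω :=
    fun z c => {ω | ∀ e ∈ 𝔄, w (e.1 + z, e.2) ω ≤ c} with hC
  set E : ℕ → Set Ω := fun n => ⋃ z ∈ shell (n+b), C z (g n) with hE
  -- measurability of the integrand
  have hfg_meas : Measurable fun u => F (g u) :=
    (hFmono.comp_antitone hganti).measurable
  have hf_meas : Measurable f :=
    ((measurable_id.pow_const _).mul (hfg_meas.pow_const _)).ennreal_ofReal
  -- the key estimate
  set A : ℕ := 2*d*(2*b+5)^(d-1) with hA
  have hkey : ∀ k : ℕ, μ (E (k+2)) ≤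
      (A : ℝ≥0∞) * ∫⁻ u in Set.Ioc ((k:ℝ)+1) ((k:ℝ)+2), f u := by
    intro k
    have hcard : (shell (k+2+b)).card ≤ A * (k+1)^(d-1) := by
      have hsub : Box (k+2+b-1) ⊆ Box (k+2+b) := by
        intro z hz
        rw [hBoxMem] at hz ⊢
        intro i; have := hz i; omega
      have hsd : (shell (k+2+b)).card
          = (2*(k+2+b)+1)^d - (2*(k+2+b-1)+1)^d := by
        rw [hshell, Finset.card_sdiff_of_subset hsub, hBoxCard, hBoxCard]
      have hc2 : 2*(k+2+b)+1 = (2*(k+1+b)+1) + 2 := by omega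
      have haux := stmt13_pow_aux (2*(k+1+b)+1) d
      have hle1 : (2*(k+2+b)+1)^d - (2*(k+2+b-1)+1)^d
          ≤ 2*d*(2*(k+2+b)+1)^(d-1) := by
        have h1 : (2*(k+2+b-1)+1) = 2*(k+1+b)+1 := by omega
        rw [h1, hc2]
        omega
      have hle2 : (2*(k+2+b)+1)^(d-1) ≤ (2*b+5)^(d-1) * (k+1)^(d-1) := by
        rw [← mul_pow]
        apply Nat.pow_le_pow_left
        nlinarith
      rw [hsd, hA]
      calc (2*(k+2+b)+1)^d - (2*(k+2+b-1)+1)^d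
          ≤ 2*d*(2*(k+2+b)+1)^(d-1) := hle1
        _ ≤ 2*d*((2*b+5)^(d-1) * (k+1)^(d-1)) := by gcongr
        _ = 2*d*(2*b+5)^(d-1) * (k+1)^(d-1) := by ring
    have hmeasE : μ (E (k+2)) ≤ (shell (k+2+b)).card * p (g ((k:ℝ)+2)) ^ m := by
      rw [hE]
      refine le_trans (measure_biUnion_finset_le _ _) ?_
      have : ∀ z ∈ shell (k+2+b), μ (C z (g ((k+2:ℕ):ℝ))) = p (g ((k:ℝ)+2)) ^ m := by
        intro z _
        rw [hC]
        have : ((k+2:ℕ):ℝ) = (k:ℝ)+2 := by push_cast; ring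
        rw [this, hprod]
      rw [Finset.sum_congr rfl this, Finset.sum_const, nsmul_eq_mul]
    -- compare with the integral over (k+1, k+2]
    have hpt : ENNReal.ofReal (((k:ℝ)+1)^(d-1) * F (g ((k:ℝ)+2)) ^ m)
        ≤ ∫⁻ u in Set.Ioc ((k:ℝ)+1) ((k:ℝ)+2), f u := by
      have hvol : volume (Set.Ioc ((k:ℝ)+1) ((k:ℝ)+2)) = 1 := by
        rw [Real.volume_Ioc]; norm_num
      calc ENNReal.ofReal (((k:ℝ)+1)^(d-1) * F (g ((k:ℝ)+2)) ^ m)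
          = ∫⁻ _ in Set.Ioc ((k:ℝ)+1) ((k:ℝ)+2),
              ENNReal.ofReal (((k:ℝ)+1)^(d-1) * F (g ((k:ℝ)+2)) ^ m) := by
            rw [setLIntegral_const, hvol, mul_one]
        _ ≤ ∫⁻ u in Set.Ioc ((k:ℝ)+1) ((k:ℝ)+2), f u := by
            refine setLIntegral_mono hf_meas ?_
            intro u hu
            apply ENNReal.ofReal_le_ofReal
            have hu1 : (k:ℝ)+1 ≤ u := le_of_lt hu.1
            have hu2 : u ≤ (k:ℝ)+2 := hu.2
            have hk1 : (0:ℝ) ≤ (k:ℝ)+1 := by positivity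
            apply mul_le_mul
            · exact pow_le_pow_left₀ hk1 hu1 _
            · exact pow_le_pow_left₀ (hFnn _) (hFmono (hganti hu2)) _
            · exact pow_nonneg (hFnn _) _
            · exact pow_nonneg (le_trans hk1 hu1) _
    have hcast : ((shell (k+2+b)).card : ℝ≥0∞) * p (g ((k:ℝ)+2)) ^ m
        ≤ (A : ℝ≥0∞) * ENNReal.ofReal (((k:ℝ)+1)^(d-1) * F (g ((k:ℝ)+2)) ^ m) := by
      have h1 : ENNReal.ofReal (((k:ℝ)+1)^(d-1) * F (g ((k:ℝ)+2)) ^ m)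
          = (((k+1)^(d-1) : ℕ) : ℝ≥0∞) * p (g ((k:ℝ)+2)) ^ m := by
        rw [ENNReal.ofReal_mul (by positivity), ENNReal.ofReal_pow (hFnn _), hFp]
        congr 1
        rw [← ENNReal.ofReal_natCast]
        congr 1
        push_cast
        ring
      have h2 : ((shell (k+2+b)).card : ℝ≥0∞) ≤ ((A * (k+1)^(d-1) : ℕ) : ℝ≥0∞) := by
        exact_mod_cast hcard
      calc ((shell (k+2+b)).card : ℝ≥0∞) * p (g ((k:ℝ)+2)) ^ m
          ≤ ((A * (k+1)^(d-1) : ℕ) : ℝ≥0∞) * p (g ((k:ℝ)+2)) ^ m := by gcongr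
        _ = (A : ℝ≥0∞) * ((((k+1)^(d-1) : ℕ)) : ℝ≥0∞) * p (g ((k:ℝ)+2)) ^ m := by
            push_cast; ring
        _ = (A : ℝ≥0∞) * ENNReal.ofReal (((k:ℝ)+1)^(d-1) * F (g ((k:ℝ)+2)) ^ m) := by
            rw [h1]; ring
    calc μ (E (k+2)) ≤ (shell (k+2+b)).card * p (g ((k:ℝ)+2)) ^ m := hmeasE
      _ ≤ (A : ℝ≥0∞) * ENNReal.ofReal (((k:ℝ)+1)^(d-1) * F (g ((k:ℝ)+2)) ^ m) := hcast
      _ ≤ (A : ℝ≥0∞) * ∫⁻ u in Set.Ioc ((k:ℝ)+1) ((k:ℝ)+2), f u := by gcongr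
  -- summability
  have hdisj : Pairwise (Function.onFun Disjoint
      fun k : ℕ => Set.Ioc ((k:ℝ)+1) ((k:ℝ)+2)) := by
    intro i j hij
    refine Set.disjoint_left.mpr ?_
    intro x hx hx'
    have h1 : (i:ℝ) + 1 < x := hx.1
    have h2 : x ≤ (i:ℝ) + 2 := hx.2
    have h3 : (j:ℝ) + 1 < x := hx'.1
    have h4 : x ≤ (j:ℝ) + 2 := hx'.2
    have : (i:ℝ) < (j:ℝ) + 1 := by linarith
    have hij1 : i ≤ j := by exact_mod_cast Nat.lt_succ_iff.mp (by exact_mod_cast this)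
    have : (j:ℝ) < (i:ℝ) + 1 := by linarith
    have hij2 : j ≤ i := by exact_mod_cast Nat.lt_succ_iff.mp (by exact_mod_cast this)
    exact hij (le_antisymm hij1 hij2)
  have hsum_int : ∑' k : ℕ, ∫⁻ u in Set.Ioc ((k:ℝ)+1) ((k:ℝ)+2), f u
      ≤ ∫⁻ u in Set.Ioi (0:ℝ), f u := by
    rw [← lintegral_iUnion (fun k => measurableSet_Ioc) hdisj]
    refine lintegral_mono_set ?_
    intro x hx
    simp only [Set.mem_iUnion] at hx
    obtain ⟨k, hk⟩ := hx
    have : (0:ℝ) < x := lt_of_le_of_lt (by positivity) hk.1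
    exact this
  have htsum : ∑' k : ℕ, μ (E (k+2)) ≠ ⊤ := by
    refine ne_of_lt (lt_of_le_of_lt (ENNReal.tsum_le_tsum hkey) ?_)
    rw [ENNReal.tsum_mul_left]
    exact ENNReal.mul_lt_top (by simp) (lt_of_le_of_lt hsum_int hconv)
  have hae := ae_eventually_notMem (μ := μ) htsum
  -- 𝔄 is nonempty
  have hm1 : 0 < m := by
    by_contra h
    have hm0 : m = 0 := by omega
    have : (⊤ : ℝ≥0∞) ≤ ∫⁻ u in Set.Ioi (0:ℝ), f u := by
      calc (⊤ : ℝ≥0∞) = 1 * volume (Set.Ioi (1:ℝ)) := by simp [Real.volume_Ioi]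
        _ = ∫⁻ _ in Set.Ioi (1:ℝ), 1 := by rw [setLIntegral_const]
        _ ≤ ∫⁻ u in Set.Ioi (1:ℝ), f u := by
            refine setLIntegral_mono hf_meas ?_
            intro u hu
            rw [hf]
            simp only [hm0, pow_zero, mul_one]
            rw [show ((1:ℝ≥0∞) = ENNReal.ofReal 1) by simp]
            apply ENNReal.ofReal_le_ofReal
            exact one_le_pow₀ (le_of_lt hu)
        _ ≤ ∫⁻ u in Set.Ioi (0:ℝ), f u := lintegral_mono_set (by
            intro x hx; exact lt_trans one_pos (show (1:ℝ) < x from hx))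
    exact absurd hconv (not_lt.mpr this)
  obtain ⟨e₁, he₁⟩ := Finset.card_pos.mp hm1
  -- pointwise implication
  have hptwise : ∀ ω, (∀ᶠ k in atTop, ω ∉ E (k+2)) →
      ω ∈ {ω | ∀ᶠ n : ℕ in atTop, ∀ z : Fin d → ℤ, (∀ i, |z i| ≤ (n : ℤ) + b) →
        ∃ e ∈ 𝔄, g n < w (e.1 + z, e.2) ω} := by
    intro ω hω
    obtain ⟨N, hN⟩ := eventually_atTop.mp hω
    have hS0ne : (Box (N+2+b)).Nonempty := by
      refine ⟨fun _ => 0, ?_⟩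
      rw [hBoxMem]; intro i; simp; positivity
    set ε : ℝ := (Box (N+2+b)).inf' hS0ne (fun z => w (e₁.1 + z, e₁.2) ω) with hε
    have hεpos : 0 < ε := by
      rw [hε, Finset.lt_inf'_iff]
      intro z _; exact hpos _ ω
    have hglim : Tendsto (fun n : ℕ => g (n:ℝ)) atTop (nhds 0) :=
      hg0.comp tendsto_natCast_atTop_atTop
    have hgsmall : ∀ᶠ n : ℕ in atTop, g (n:ℝ) < ε :=
      hglim.eventually_lt_const hεpos
    simp only [Set.mem_setOf_eq]
    filter_upwards [hgsmall, eventually_ge_atTop (N+2)] with n hgn hn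
    intro z hz
    by_cases hcase : ∀ i, |z i| ≤ ((N:ℤ)+2+b)
    · refine ⟨e₁, he₁, ?_⟩
      have hzmem : z ∈ Box (N+2+b) := by
        rw [hBoxMem]; intro i; have := hcase i; push_cast; omega
      have := Finset.inf'_le (fun z => w (e₁.1 + z, e₁.2) ω) hzmem
      calc g (n:ℝ) < ε := hgn
        _ ≤ w (e₁.1 + z, e₁.2) ω := this
    · push_neg at hcase
      obtain ⟨i₀, hi₀⟩ := hcase
      have hne : (Finset.univ : Finset (Fin d)).Nonempty := ⟨i₀, Finset.mem_univ _⟩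
      set r : ℤ := Finset.univ.sup' hne (fun i => |z i|) with hr
      have hrle : ∀ i, |z i| ≤ r := fun i =>
        Finset.le_sup' (fun i => |z i|) (Finset.mem_univ i)
      obtain ⟨iM, _, hiM⟩ := Finset.exists_mem_eq_sup' hne (fun i => |z i|)
      have hrgt : (N:ℤ)+2+b < r := lt_of_lt_of_le hi₀ (hrle i₀)
      have hrub : r ≤ (n:ℤ) + b := by
        rw [hr]
        exact Finset.sup'_le hne _ (fun i _ => hz i)
      set k : ℕ := (r - b).toNat with hk
      have hkz : (k:ℤ) = r - b := Int.toNat_of_nonneg (by omega)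
      have hkN : N + 2 ≤ k := by omega
      have hkn : k ≤ n := by omega
      have hnotE : ω ∉ E k := by
        have h := hN (k-2) (by omega)
        have : k - 2 + 2 = k := by omega
        rwa [this] at h
      have hzshell : z ∈ shell (k+b) := by
        rw [hshell, Finset.mem_sdiff]
        constructor
        · rw [hBoxMem]; intro i
          have := hrle i; push_cast; omega
        · rw [hBoxMem]
          push_neg
          refine ⟨iM, ?_⟩
          have hkb1 : ((k+b-1 : ℕ) : ℤ) = r - 1 := by omega
          rw [hkb1]
          omega
      rw [hE] at hnotE
      simp only [Set.mem_iUnion] at hnotE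
      push_neg at hnotE
      have hnz := hnotE z hzshell
      simp only [hC, Set.mem_setOf_eq] at hnz
      push_neg at hnz
      obtain ⟨e, he𝔄, hgt⟩ := hnz
      refine ⟨e, he𝔄, lt_of_le_of_lt ?_ hgt⟩
      exact hganti (by exact_mod_cast hkn)
  -- conclude
  have h0 : μ {ω | ¬ ∀ᶠ k in atTop, ω ∉ E (k+2)} = 0 := hae
  refine le_antisymm prob_le_one ?_
  calc (1:ℝ≥0∞) = μ Set.univ := measure_univ.symm
    _ ≤ μ ({ω | ¬ ∀ᶠ k in atTop, ω ∉ E (k+2)} ∪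
        {ω | ∀ᶠ n : ℕ in atTop, ∀ z : Fin d → ℤ, (∀ i, |z i| ≤ (n : ℤ) + b) →
          ∃ e ∈ 𝔄, g n < w (e.1 + z, e.2) ω}) := by
        refine measure_mono (fun ω _ => ?_)
        by_cases h : ∀ᶠ k in atTop, ω ∉ E (k+2)
        · exact Or.inr (hptwise ω h)
        · exact Or.inl h
    _ ≤ μ {ω | ¬ ∀ᶠ k in atTop, ω ∉ E (k+2)} +
        μ {ω | ∀ᶠ n : ℕ in atTop, ∀ z : Fin d → ℤ, (∀ i, |z i| ≤ (n : ℤ) + b) →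
          ∃ e ∈ 𝔄, g n < w (e.1 + z, e.2) ω} := measure_union_le _ _
    _ = μ {ω | ∀ᶠ n : ℕ in atTop, ∀ z : Fin d → ℤ, (∀ i, |z i| ≤ (n : ℤ) + b) →
          ∃ e ∈ 𝔄, g n < w (e.1 + z, e.2) ω} := by rw [h0, zero_add]
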